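/- Let f : ℝ → ℝ be Lipschitz with constant L and λL < 1, and let F(v₁,v₂) = ½(f(v₁)+f(v₂)) − (1/(2λ))(v₂−v₁) be the Lax–Friedrichs flux. Then for all v₁ ≤ v ≤ v₂, (f(v) − F(v₁,v₂))/(v₂−v₁) ≥ k where k = (1/(2λ))(1 − λL) > 0 (whenever v₁ < v₂). -/
import Mathlib


/-- Pointwise viscosity lower bound for the Lax–Friedrichs flux: under the CFL
condition `λL < 1`, for `v₁ ≤ v ≤ v₂` with `v₁ < v₂`,
`(f(v) − F(v₁,v₂))/(v₂−v₁) ≥ k` with `k = (1/(2λ))(1 − λL) > 0`. -/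
theorem laxFriedrichs_pointwise_viscosity (f : ℝ → ℝ) (lam L : ℝ)
    (hlam : 0 < lam) (hL : 0 ≤ L)
    (hlip : ∀ x y, |f x - f y| ≤ L * |x - y|)
    (hCFL : lam * L < 1)
    (F : ℝ → ℝ → ℝ)
    (hF : ∀ v₁ v₂, F v₁ v₂ = (f v₁ + f v₂) / 2 - (1 / (2 * lam)) * (v₂ - v₁)) :
    (0 < (1 / (2 * lam)) * (1 - lam * L)) ∧
    ∀ v₁ v v₂ : ℝ, v₁ ≤ v → v ≤ v₂ → v₁ < v₂ →
      (1 / (2 * lam)) * (1 - lam * L) ≤ (f v - F v₁ v₂) / (v₂ - v₁) := by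
  constructor
  · have h1 : 0 < 1 / (2 * lam) := by positivity
    have h2 : 0 < 1 - lam * L := by linarith
    positivity
  · intro v₁ v v₂ h1 h2 h12
    rw [hF, le_div_iff₀ (by linarith : (0:ℝ) < v₂ - v₁)]
    have b1 := abs_le.mp (hlip v v₁)
    have b2 := abs_le.mp (hlip v v₂)
    rw [abs_of_nonneg (by linarith : (0:ℝ) ≤ v - v₁)] at b1
    rw [abs_of_nonpos (by linarith : v - v₂ ≤ (0:ℝ))] at b2
    have hl : (0:ℝ) < 2 * lam := by linarith
    have key : 1 / (2 * lam) * (2 * lam) = 1 := by field_simp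
    nlinarith [mul_pos hlam (sub_pos.mpr h12), b1.1, b2.1,
      mul_le_mul_of_nonneg_left b1.1 hlam.le]
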